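/- arXiv:1112.5248 — 2 statements merged into one kernel-verified Lean document; each statement's English description precedes it below -/
import Mathlib

section
/- Let α_n, β_n, γ_n be positive reals with α_n → ∞, β_n → ∞, γ_n → ∞, α_n/γ_n → 0 and β_n/γ_n → 0. Then the sequence of boxes (I(α_n, β_n, γ_n))_{n≥1} is a two-sided Følner sequence in H₃(ℝ). Moreover, if in addition (α_n β_n)/γ_n → 0, then λ(I(α_n,β_n,γ_n) △ I(α_n,β_n,γ_n)^{-1}) / λ(I(α_n,β_n,γ_n)) → 0 as n → ∞. -/
open Filter Topology Pointwise

/-- The real Heisenberg group `H₃(ℝ)`: `⟨a, b, c⟩` encodes the upper unitriangular `3 × 3`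
matrix with entry `a` at position `(1,2)`, `b` at position `(2,3)` and `c` at position `(1,3)`. -/
@[ext] structure H3 : Type where
  a : ℝ
  b : ℝ
  c : ℝ

namespace H3

instance : Mul H3 := ⟨fun g h => ⟨g.a + h.a, g.b + h.b, g.c + h.c + g.a * h.b⟩⟩
instance : One H3 := ⟨⟨0, 0, 0⟩⟩
instance : Inv H3 := ⟨fun g => ⟨-g.a, -g.b, g.a * g.b - g.c⟩⟩

@[simp] lemma mul_a (g h : H3) : (g * h).a = g.a + h.a := rfl
@[simp] lemma mul_b (g h : H3) : (g * h).b = g.b + h.b := rfl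
@[simp] lemma mul_c (g h : H3) : (g * h).c = g.c + h.c + g.a * h.b := rfl
@[simp] lemma one_a : (1 : H3).a = 0 := rfl
@[simp] lemma one_b : (1 : H3).b = 0 := rfl
@[simp] lemma one_c : (1 : H3).c = 0 := rfl
@[simp] lemma inv_a (g : H3) : g⁻¹.a = -g.a := rfl
@[simp] lemma inv_b (g : H3) : g⁻¹.b = -g.b := rfl
@[simp] lemma inv_c (g : H3) : g⁻¹.c = g.a * g.b - g.c := rfl

instance : Group H3 where
  mul_assoc g h k := by ext <;> simp <;> ring
  one_mul g := by ext <;> simp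
  mul_one g := by ext <;> simp
  inv_mul_cancel g := by ext <;> simp

def toProd (g : H3) : ℝ × ℝ × ℝ := (g.a, g.b, g.c)
def ofProd (p : ℝ × ℝ × ℝ) : H3 := ⟨p.1, p.2.1, p.2.2⟩

/-- The natural (Euclidean) topology of `H₃(ℝ)`. -/
instance : TopologicalSpace H3 := TopologicalSpace.induced toProd inferInstance
/-- The Borel σ-algebra of `H₃(ℝ)`. -/
instance : MeasurableSpace H3 := MeasurableSpace.comap toProd inferInstance

/-- A Haar measure on `H₃(ℝ)` (Lebesgue measure in the upper-triangular coordinates);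
it satisfies `haar (box α β γ) = 8αβγ`. -/
noncomputable def haar : MeasureTheory.Measure H3 :=
  MeasureTheory.Measure.map ofProd MeasureTheory.volume

/-- The one-parameter subgroup `a(t)` (entry `t` at position `(1,2)`). -/
def A (t : ℝ) : H3 := ⟨t, 0, 0⟩
/-- The one-parameter subgroup `b(t)` (entry `t` at position `(2,3)`). -/
def B (t : ℝ) : H3 := ⟨0, t, 0⟩
/-- The central one-parameter subgroup `c(t)` (entry `t` at position `(1,3)`). -/
def C (t : ℝ) : H3 := ⟨0, 0, t⟩

/-- The flip automorphism `θ` of `H₃(ℝ)`: `θ(a(t)) = b(t)`, `θ(b(t)) = a(t)`, `θ(c(t)) = c(-t)`. -/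
def flip (g : H3) : H3 := ⟨g.b, g.a, g.a * g.b - g.c⟩

/-- The box `I(α,β,γ) = {c(t₃)b(t₂)a(t₁) : |t₁| ≤ α, |t₂| ≤ β, |t₃| ≤ γ}`. -/
def box (α β γ : ℝ) : Set H3 := {g : H3 | |g.a| ≤ α ∧ |g.b| ≤ β ∧ |g.c| ≤ γ}

end H3

/-- A (jointly measurable) measure-preserving action of the Heisenberg group `H₃(ℝ)`
by invertible measure-preserving transformations on a measure space `(X, μ)`. -/
structure H3System : Type 1 where
  X : Type
  [ms : MeasurableSpace X]
  μ : MeasureTheory.Measure X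
  T : H3 → X → X
  t_one : ∀ x, T 1 x = x
  t_mul : ∀ g h x, T (g * h) x = T g (T h x)
  t_meas : Measurable fun p : H3 × X => T p.1 p.2
  t_mp : ∀ g, MeasureTheory.MeasurePreserving (T g) μ μ

attribute [instance] H3System.ms

section BaseDefs

open MeasureTheory

variable {Y : Type*} [MeasurableSpace Y]

/-- Mixing for a family of measure-preserving maps indexed by `H₃(ℝ)`:
`ν (S g A ∩ B) → ν A · ν B` as `g → ∞`. -/
def MixingFam (ν : Measure Y) (S : H3 → Y → Y) : Prop :=
  ∀ A B : Set Y, MeasurableSet A → MeasurableSet B →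
    Tendsto (fun g : H3 => ν (S g '' A ∩ B)) (cocompact H3) (𝓝 (ν A * ν B))

/-- Mixing of order `l` (with `l+1` sets) for a family of maps indexed by `H₃(ℝ)`. -/
def MixingOfOrderFam (ν : Measure Y) (S : H3 → Y → Y) (l : ℕ) : Prop :=
  ∀ ε : ℝ, 0 < ε → ∀ A : Fin (l + 1) → Set Y, (∀ i, MeasurableSet (A i)) →
    ∃ K : Set H3, IsCompact K ∧
      ∀ g : Fin (l + 1) → H3, (∀ i j, i ≠ j → g i * (g j)⁻¹ ∉ K) →
        |(ν (⋂ i, S (g i) '' A i)).toReal - ∏ i, (ν (A i)).toReal| < ε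

/-- Mixing for a flow (a family of maps indexed by `ℝ`). -/
def FlowMixingFam (ν : Measure Y) (S : ℝ → Y → Y) : Prop :=
  ∀ A B : Set Y, MeasurableSet A → MeasurableSet B →
    Tendsto (fun t : ℝ => ν (S t '' A ∩ B)) (cocompact ℝ) (𝓝 (ν A * ν B))

/-- Mixing of order `l` (with `l+1` sets) for a flow. -/
def FlowMixingOfOrderFam (ν : Measure Y) (S : ℝ → Y → Y) (l : ℕ) : Prop :=
  ∀ ε : ℝ, 0 < ε → ∀ A : Fin (l + 1) → Set Y, (∀ i, MeasurableSet (A i)) →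
    ∃ K : Set ℝ, IsCompact K ∧
      ∀ t : Fin (l + 1) → ℝ, (∀ i j, i ≠ j → t i - t j ∉ K) →
        |(ν (⋂ i, S (t i) '' A i)).toReal - ∏ i, (ν (A i)).toReal| < ε

namespace H3System

variable (s : H3System)

/-- `(X, ℬ, μ)` is a standard probability space. -/
def IsStdProb : Prop := StandardBorelSpace s.X ∧ IsProbabilityMeasure s.μ

/-- Freeness: for almost every point, only the identity fixes it. -/
def Free : Prop := ∀ᵐ x ∂s.μ, ∀ g : H3, s.T g x = x → g = 1

/-- Mixing of the whole `H₃(ℝ)`-action. -/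
def Mixing : Prop := MixingFam s.μ s.T

/-- Mixing of the central flow `(T_{c(t)})_{t∈ℝ}`. -/
def CentralMixing : Prop := FlowMixingFam s.μ fun t => s.T (H3.C t)

/-- Ergodicity of the central flow `(T_{c(t)})_{t∈ℝ}`. -/
def CentralErgodic : Prop :=
  ∀ A : Set s.X, MeasurableSet A → (∀ t : ℝ, s.T (H3.C t) ⁻¹' A = A) →
    s.μ A = 0 ∨ s.μ Aᶜ = 0

/-- Rigidity: some sequence `gₙ → ∞` satisfies `μ(T_{gₙ}A ∩ B) → μ(A ∩ B)`. -/
def Rigid : Prop :=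
  ∃ g : ℕ → H3, Tendsto g atTop (cocompact H3) ∧
    ∀ A B : Set s.X, MeasurableSet A → MeasurableSet B →
      Tendsto (fun n => s.μ (s.T (g n) '' A ∩ B)) atTop (𝓝 (s.μ (A ∩ B)))

/-- Weak mixing: the diagonal product action on `(X × X, μ × μ)` is ergodic. -/
def WeaklyMixing : Prop :=
  ∀ A : Set (s.X × s.X), MeasurableSet A →
    (∀ g : H3, (fun p : s.X × s.X => (s.T g p.1, s.T g p.2)) ⁻¹' A = A) →
    (s.μ.prod s.μ) A = 0 ∨ (s.μ.prod s.μ) Aᶜ = 0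

/-- Zero type (mixing in infinite measure): `μ(T_g D₁ ∩ D₂) → 0` as `g → ∞`
for sets of finite measure. -/
def ZeroType : Prop :=
  ∀ D₁ D₂ : Set s.X, MeasurableSet D₁ → MeasurableSet D₂ → s.μ D₁ < ⊤ → s.μ D₂ < ⊤ →
    Tendsto (fun g : H3 => s.μ (s.T g '' D₁ ∩ D₂)) (cocompact H3) (𝓝 0)

end H3System

/-- A (one-sided) Følner sequence of relatively compact subsets of positive finite
Haar measure in `H₃(ℝ)`. -/
def IsFolnerSeq (F : ℕ → Set H3) : Prop :=
  (∀ n, IsCompact (closure (F n)) ∧ 0 < H3.haar (F n) ∧ H3.haar (F n) < ⊤) ∧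
  ∀ g : H3,
    Tendsto (fun n => H3.haar (symmDiff ((g * ·) '' F n) (F n)) / H3.haar (F n)) atTop (𝓝 0)

/-- A Rokhlin tower `(Y, f, F)` for the system `s`: `f : Y → F` is measurable and
`f⁻¹(gH) = T_g f⁻¹(H)` for Borel `H ⊆ F` and `g` with `gH ⊆ F`. -/
def IsRokhlinTower (s : H3System) (Y : Set s.X) (f : s.X → H3) (F : Set H3) : Prop :=
  MeasurableSet Y ∧ Measurable f ∧ (∀ x ∈ Y, f x ∈ F) ∧
  ∀ (H : Set H3) (g : H3), MeasurableSet H → H ⊆ F → (g * ·) '' H ⊆ F →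
    Y ∩ f ⁻¹' ((g * ·) '' H) = s.T g '' (Y ∩ f ⁻¹' H)

/-- Rank one along a given sequence `(Fₙ)`: there are Rokhlin towers `(Yₙ, fₙ, Fₙ)` such
that every measurable set is approximated by unions of levels of the towers. -/
def RankOneAlong (s : H3System) (F : ℕ → Set H3) : Prop :=
  ∃ (Y : ℕ → Set s.X) (f : ℕ → s.X → H3),
    (∀ n, IsRokhlinTower s (Y n) (f n) (F n)) ∧
    ∀ Bset : Set s.X, MeasurableSet Bset →
      ∃ Hs : ℕ → Set H3, (∀ n, MeasurableSet (Hs n) ∧ Hs n ⊆ F n) ∧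
        Tendsto (fun n => s.μ (symmDiff Bset (Y n ∩ (f n) ⁻¹' Hs n))) atTop (𝓝 0)

/-- Rank one: rank one along some Følner sequence. -/
def RankOne (s : H3System) : Prop := ∃ F : ℕ → Set H3, IsFolnerSeq F ∧ RankOneAlong s F

section Joinings

variable (s : H3System) {ι : Type} (φ : ι → H3)

/-- A 2-fold self-joining of the sub-action `(T_{φ i})_{i∈ι}`: a measure on `X × X`,
invariant under the diagonal action, whose both marginals equal `μ`. -/
def IsSelfJoining2 (ν : Measure (s.X × s.X)) : Prop :=
  IsProbabilityMeasure ν ∧ ν.map Prod.fst = s.μ ∧ ν.map Prod.snd = s.μ ∧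
  ∀ i : ι, MeasurePreserving (fun p : s.X × s.X => (s.T (φ i) p.1, s.T (φ i) p.2)) ν ν

/-- An ergodic 2-fold self-joining. -/
def IsErgodicSelfJoining2 (ν : Measure (s.X × s.X)) : Prop :=
  IsSelfJoining2 s φ ν ∧
  ∀ A : Set (s.X × s.X), MeasurableSet A →
    (∀ i : ι, (fun p : s.X × s.X => (s.T (φ i) p.1, s.T (φ i) p.2)) ⁻¹' A = A) →
    ν A = 0 ∨ ν Aᶜ = 0

/-- The centralizer of the sub-action `(T_{φ i})_{i∈ι}`: invertible measure-preserving
transformations commuting (a.e.) with every `T_{φ i}`. -/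
def InCentralizer (R : s.X → s.X) : Prop :=
  Measurable R ∧ MeasurePreserving R s.μ s.μ ∧
  (∃ R' : s.X → s.X, Measurable R' ∧ MeasurePreserving R' s.μ s.μ ∧
    (∀ᵐ x ∂s.μ, R' (R x) = x) ∧ (∀ᵐ x ∂s.μ, R (R' x) = x)) ∧
  ∀ i : ι, ∀ᵐ x ∂s.μ, R (s.T (φ i) x) = s.T (φ i) (R x)

/-- The off-diagonal (graph) self-joining `μ_R` determined by `R`,
i.e. `μ_R(A × B) = μ(A ∩ R⁻¹B) = μ(RA ∩ B)`. -/
noncomputable def graphJoining (R : s.X → s.X) : Measure (s.X × s.X) :=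
  s.μ.map fun x => (x, R x)

/-- 2-fold simplicity of the sub-action `(T_{φ i})_{i∈ι}`: every ergodic 2-fold
self-joining is either off-diagonal over the centralizer or product measure. -/
def TwoFoldSimple : Prop :=
  ∀ ν : Measure (s.X × s.X), IsErgodicSelfJoining2 s φ ν →
    (∃ R : s.X → s.X, InCentralizer s φ R ∧ ν = graphJoining s R) ∨ ν = s.μ.prod s.μ

/-- An `l`-fold self-joining of the sub-action `(T_{φ i})_{i∈ι}`. -/
def IsSelfJoining (l : ℕ) (ν : Measure (Fin l → s.X)) : Prop :=
  IsProbabilityMeasure ν ∧ (∀ k : Fin l, ν.map (fun x => x k) = s.μ) ∧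
  ∀ i : ι, MeasurePreserving (fun (x : Fin l → s.X) k => s.T (φ i) (x k)) ν ν

/-- Simplicity: 2-fold simple, and for every `l ≥ 2` the only `l`-fold self-joining all of
whose pairwise 2-dimensional projections are `μ × μ` is the product measure. -/
def Simple : Prop :=
  TwoFoldSimple s φ ∧
  ∀ l : ℕ, 2 ≤ l → ∀ ν : Measure (Fin l → s.X), IsSelfJoining s φ l ν →
    (∀ j k : Fin l, j ≠ k → ν.map (fun x => (x j, x k)) = s.μ.prod s.μ) →
    ν = Measure.pi fun _ => s.μ

/-- The centralizer of the sub-action `(T_{φ i})_{i∈ι}` equals `{T_g : g ∈ H₃(ℝ)}`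
(modulo null sets). -/
def CentralizerEq : Prop :=
  ∀ R : s.X → s.X, InCentralizer s φ R ↔ ∃ g : H3, ∀ᵐ x ∂s.μ, R x = s.T g x

/-- Minimal self-joinings (MSJ) of the sub-action `(T_{φ i})_{i∈ι}`: simple, and the
centralizer consists of the transformations of the sub-action itself. -/
def HasMSJ : Prop :=
  Simple s φ ∧ ∀ R : s.X → s.X, InCentralizer s φ R → ∃ i : ι, ∀ᵐ x ∂s.μ, R x = s.T (φ i) x

end Joinings

end BaseDefs

section Aux

open MeasureTheory Set H3

namespace H3

lemma measurable_toProd : Measurable toProd := fun s hs => ⟨s, hs, rfl⟩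

lemma measurable_ofProd : Measurable ofProd := fun s hs => by
  obtain ⟨t, ht, rfl⟩ := hs
  exact ht

lemma haar_apply {S : Set H3} (hS : MeasurableSet S) : haar S = volume (ofProd ⁻¹' S) :=
  Measure.map_apply measurable_ofProd hS

lemma box_eq (α β γ : ℝ) :
    box α β γ = toProd ⁻¹' (Icc (-α) α ×ˢ Icc (-β) β ×ˢ Icc (-γ) γ) := by
  ext g; simp [box, toProd, abs_le, Prod.le_def]; tauto

lemma measurableSet_box (α β γ : ℝ) : MeasurableSet (box α β γ) := by
  rw [box_eq]
  exact measurable_toProd ((measurableSet_Icc.prod (measurableSet_Icc.prod measurableSet_Icc)))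

lemma ofReal_mul3 {a b : ℝ} (ha : 0 ≤ a) (hb : 0 ≤ b) (c : ℝ) :
    ENNReal.ofReal a * (ENNReal.ofReal b * ENNReal.ofReal c) = ENNReal.ofReal (a * (b * c)) := by
  rcases le_or_gt 0 c with hc | hc
  · rw [← ENNReal.ofReal_mul hb, ← ENNReal.ofReal_mul ha]
  · rw [ENNReal.ofReal_of_nonpos hc.le, ENNReal.ofReal_of_nonpos
      (mul_nonpos_of_nonneg_of_nonpos ha (mul_nonpos_of_nonneg_of_nonpos hb hc.le))]
    simp

lemma haar_box {α β : ℝ} (hα : 0 ≤ α) (hβ : 0 ≤ β) (γ : ℝ) :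
    haar (box α β γ) = ENNReal.ofReal ((α + α) * ((β + β) * (γ + γ))) := by
  rw [haar_apply (measurableSet_box α β γ)]
  have : ofProd ⁻¹' box α β γ = Icc (-α) α ×ˢ Icc (-β) β ×ˢ Icc (-γ) γ := by
    ext p; simp [box, ofProd, abs_le, Prod.le_def]; tauto
  rw [this, Measure.volume_eq_prod, Measure.prod_prod, Measure.volume_eq_prod,
    Measure.prod_prod, Real.volume_Icc, Real.volume_Icc, Real.volume_Icc]
  rw [ofReal_mul3 (by linarith) (by linarith)]
  ring_nf

lemma continuous_toProd : Continuous toProd := continuous_induced_dom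

lemma isCompact_box (α β γ : ℝ) : IsCompact (box α β γ) := by
  rw [box_eq]
  have h : IsCompact (Icc (-α) α ×ˢ Icc (-β) β ×ˢ Icc (-γ) γ) :=
    isCompact_Icc.prod (isCompact_Icc.prod isCompact_Icc)
  have hemb : Topology.IsInducing toProd := ⟨rfl⟩
  apply hemb.isCompact_preimage' h
  intro p hp
  exact ⟨ofProd p, rfl⟩

/-- Left translation in coordinates. -/
lemma mp_left (g : H3) :
    MeasurePreserving (fun p : ℝ × ℝ × ℝ => (g.a + p.1, g.b + p.2.1, g.c + p.2.2 + g.a * p.2.1))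
      volume volume := by
  rw [Measure.volume_eq_prod]
  have h2 : MeasurePreserving (fun q : ℝ × ℝ => (g.b + q.1, g.c + q.2 + g.a * q.1))
      volume volume := by
    rw [Measure.volume_eq_prod]
    refine (measurePreserving_add_left volume g.b).skew_product
      (show Measurable (Function.uncurry fun (y z : ℝ) => g.c + z + g.a * y) by fun_prop) ?_
    refine Filter.Eventually.of_forall fun y => ?_
    have : (fun z : ℝ => g.c + z + g.a * y) = fun z : ℝ => z + (g.c + g.a * y) := by
      funext z; ring
    rw [this]
    exact (measurePreserving_add_right volume (g.c + g.a * y)).map_eq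
  exact (measurePreserving_add_left volume g.a).prod h2

/-- Right translation in coordinates. -/
lemma mp_right (g : H3) :
    MeasurePreserving (fun p : ℝ × ℝ × ℝ => (p.1 + g.a, p.2.1 + g.b, p.2.2 + g.c + p.1 * g.b))
      volume volume := by
  rw [Measure.volume_eq_prod]
  refine (measurePreserving_add_right volume g.a).skew_product
    (show Measurable (Function.uncurry fun (x : ℝ) (q : ℝ × ℝ) =>
      (q.1 + g.b, q.2 + g.c + x * g.b)) by fun_prop) ?_
  refine Filter.Eventually.of_forall fun x => ?_
  have : (fun q : ℝ × ℝ => (q.1 + g.b, q.2 + g.c + x * g.b))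
      = fun q : ℝ × ℝ => (q.1 + g.b, q.2 + (g.c + x * g.b)) := by
    funext q; simp; ring
  rw [Measure.volume_eq_prod, this]
  exact ((measurePreserving_add_right volume g.b).prod
    (measurePreserving_add_right volume (g.c + x * g.b))).map_eq

lemma measurable_mul_left (g : H3) : Measurable (g * ·) := by
  have : (g * ·) = ofProd ∘ (fun p : ℝ × ℝ × ℝ =>
      (g.a + p.1, g.b + p.2.1, g.c + p.2.2 + g.a * p.2.1)) ∘ toProd := rfl
  rw [this]
  exact measurable_ofProd.comp ((by fun_prop : Measurable (fun p : ℝ × ℝ × ℝ =>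
      (g.a + p.1, g.b + p.2.1, g.c + p.2.2 + g.a * p.2.1))).comp measurable_toProd)

lemma measurable_mul_right (g : H3) : Measurable (· * g) := by
  have : (· * g) = ofProd ∘ (fun p : ℝ × ℝ × ℝ =>
      (p.1 + g.a, p.2.1 + g.b, p.2.2 + g.c + p.1 * g.b)) ∘ toProd := rfl
  rw [this]
  exact measurable_ofProd.comp ((by fun_prop : Measurable (fun p : ℝ × ℝ × ℝ =>
      (p.1 + g.a, p.2.1 + g.b, p.2.2 + g.c + p.1 * g.b))).comp measurable_toProd)

lemma map_mul_left (g : H3) : Measure.map (g * ·) haar = haar := by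
  rw [haar, Measure.map_map (measurable_mul_left g) measurable_ofProd]
  have : (g * ·) ∘ ofProd = ofProd ∘ (fun p : ℝ × ℝ × ℝ =>
      (g.a + p.1, g.b + p.2.1, g.c + p.2.2 + g.a * p.2.1)) := rfl
  rw [this, ← Measure.map_map measurable_ofProd (by fun_prop), (mp_left g).map_eq]

lemma map_mul_right (g : H3) : Measure.map (· * g) haar = haar := by
  rw [haar, Measure.map_map (measurable_mul_right g) measurable_ofProd]
  have : (· * g) ∘ ofProd = ofProd ∘ (fun p : ℝ × ℝ × ℝ =>
      (p.1 + g.a, p.2.1 + g.b, p.2.2 + g.c + p.1 * g.b)) := rfl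
  rw [this, ← Measure.map_map measurable_ofProd (by fun_prop), (mp_right g).map_eq]

lemma haar_image_mul_left (g : H3) {S : Set H3} (hS : MeasurableSet S) :
    haar ((g * ·) '' S) = haar S := by
  have h1 : (g * ·) '' S = (g⁻¹ * ·) ⁻¹' S := by
    ext x
    constructor
    · rintro ⟨y, hy, rfl⟩; simpa [← mul_assoc] using hy
    · intro hx; exact ⟨g⁻¹ * x, hx, by simp [← mul_assoc]⟩
  rw [h1, ← Measure.map_apply (measurable_mul_left g⁻¹) hS, map_mul_left]

lemma haar_image_mul_right (g : H3) {S : Set H3} (hS : MeasurableSet S) :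
    haar ((· * g) '' S) = haar S := by
  have h1 : (· * g) '' S = (· * g⁻¹) ⁻¹' S := by
    ext x
    constructor
    · rintro ⟨y, hy, rfl⟩; simpa [mul_assoc] using hy
    · intro hx; exact ⟨x * g⁻¹, hx, by simp [mul_assoc]⟩
  rw [h1, ← Measure.map_apply (measurable_mul_right g⁻¹) hS, map_mul_right]

lemma box_mono {α β γ γ' : ℝ} (h : γ ≤ γ') : box α β γ ⊆ box α β γ' :=
  fun x ⟨h1, h2, h3⟩ => ⟨h1, h2, h3.trans h⟩

lemma mul_box_subset_left {α β γ r : ℝ} (hα : 0 ≤ α) (hβ : 0 ≤ β) {g : H3}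
    (hga : |g.a| ≤ r) (hgb : |g.b| ≤ r) (hgc : |g.c| ≤ r + r ^ 2) :
    (g * ·) '' box α β γ ⊆ box (α + r) (β + r) (γ + (r + r ^ 2 + (r * α + r * β))) := by
  have hr : 0 ≤ r := le_trans (abs_nonneg _) hga
  rintro _ ⟨h, ⟨h1, h2, h3⟩, rfl⟩
  refine ⟨?_, ?_, ?_⟩
  · simp only [mul_a]
    calc |g.a + h.a| ≤ |g.a| + |h.a| := abs_add_le _ _
      _ ≤ α + r := by linarith
  · simp only [mul_b]
    calc |g.b + h.b| ≤ |g.b| + |h.b| := abs_add_le _ _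
      _ ≤ β + r := by linarith
  · simp only [mul_c]
    have e1 : |g.c + h.c + g.a * h.b| ≤ |g.c| + |h.c| + |g.a| * |h.b| := by
      calc |g.c + h.c + g.a * h.b| ≤ |g.c + h.c| + |g.a * h.b| := abs_add_le _ _
        _ ≤ |g.c| + |h.c| + |g.a| * |h.b| := by
            rw [abs_mul]; linarith [abs_add_le g.c h.c]
    have e2 : |g.a| * |h.b| ≤ r * β := mul_le_mul hga h2 (abs_nonneg _) hr
    nlinarith [mul_nonneg hr hα]

lemma mul_box_subset_right {α β γ r : ℝ} (hα : 0 ≤ α) (hβ : 0 ≤ β) {g : H3}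
    (hga : |g.a| ≤ r) (hgb : |g.b| ≤ r) (hgc : |g.c| ≤ r + r ^ 2) :
    (· * g) '' box α β γ ⊆ box (α + r) (β + r) (γ + (r + r ^ 2 + (r * α + r * β))) := by
  have hr : 0 ≤ r := le_trans (abs_nonneg _) hga
  rintro _ ⟨h, ⟨h1, h2, h3⟩, rfl⟩
  refine ⟨?_, ?_, ?_⟩
  · simp only [mul_a]
    calc |h.a + g.a| ≤ |h.a| + |g.a| := abs_add_le _ _
      _ ≤ α + r := by linarith
  · simp only [mul_b]
    calc |h.b + g.b| ≤ |h.b| + |g.b| := abs_add_le _ _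
      _ ≤ β + r := by linarith
  · simp only [mul_c]
    have e1 : |h.c + g.c + h.a * g.b| ≤ |h.c| + |g.c| + |h.a| * |g.b| := by
      calc |h.c + g.c + h.a * g.b| ≤ |h.c + g.c| + |h.a * g.b| := abs_add_le _ _
        _ ≤ |h.c| + |g.c| + |h.a| * |g.b| := by
            rw [abs_mul]; linarith [abs_add_le h.c g.c]
    have e2 : |h.a| * |g.b| ≤ α * r := mul_le_mul h1 hgb (abs_nonneg _) hα
    nlinarith [mul_nonneg hr hβ]

lemma symmDiff_mul_left_subset {F B : Set H3} (g : H3)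
    (h1 : (g * ·) '' F ⊆ B) (h2 : (g⁻¹ * ·) '' F ⊆ B) :
    symmDiff ((g * ·) '' F) F ⊆ (B \ F) ∪ (g * ·) '' (B \ F) := by
  rw [Set.symmDiff_def]
  rintro x (⟨hx1, hx2⟩ | ⟨hx1, hx2⟩)
  · exact Or.inl ⟨h1 hx1, hx2⟩
  · refine Or.inr ⟨g⁻¹ * x, ⟨h2 ⟨x, hx1, rfl⟩, fun hc => hx2 ⟨g⁻¹ * x, hc, by simp [← mul_assoc]⟩⟩,
      by simp [← mul_assoc]⟩

lemma symmDiff_mul_right_subset {F B : Set H3} (g : H3)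
    (h1 : (· * g) '' F ⊆ B) (h2 : (· * g⁻¹) '' F ⊆ B) :
    symmDiff ((· * g) '' F) F ⊆ (B \ F) ∪ (· * g) '' (B \ F) := by
  rw [Set.symmDiff_def]
  rintro x (⟨hx1, hx2⟩ | ⟨hx1, hx2⟩)
  · exact Or.inl ⟨h1 hx1, hx2⟩
  · refine Or.inr ⟨x * g⁻¹, ⟨h2 ⟨x, hx1, rfl⟩, fun hc => hx2 ⟨x * g⁻¹, hc, by simp [mul_assoc]⟩⟩,
      by simp [mul_assoc]⟩

lemma ofReal_sub_le (p q : ℝ) :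
    ENNReal.ofReal p - ENNReal.ofReal q ≤ ENNReal.ofReal (p - q) := by
  rw [tsub_le_iff_right]
  calc ENNReal.ofReal p = ENNReal.ofReal ((p - q) + q) := by rw [sub_add_cancel]
    _ ≤ _ := ENNReal.ofReal_add_le

end H3

end Aux

section Aux2

open MeasureTheory Set H3

namespace H3

lemma folner_bound {α β γ r : ℝ} (hα : 0 < α) (hβ : 0 < β) (hγ : 0 < γ) (hr : 0 < r)
    {g : H3} (hga : |g.a| ≤ r) (hgb : |g.b| ≤ r) (hgc : |g.c| ≤ r) :
    haar (symmDiff ((g * ·) '' box α β γ) (box α β γ)) / haar (box α β γ)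
        ≤ ENNReal.ofReal ((2 * ((α + r + (α + r)) * ((β + r + (β + r)) *
            (γ + (r + r ^ 2 + (r * α + r * β)) + (γ + (r + r ^ 2 + (r * α + r * β)))))
          - (α + α) * ((β + β) * (γ + γ)))) / ((α + α) * ((β + β) * (γ + γ)))) ∧
    haar (symmDiff ((· * g) '' box α β γ) (box α β γ)) / haar (box α β γ)
        ≤ ENNReal.ofReal ((2 * ((α + r + (α + r)) * ((β + r + (β + r)) *
            (γ + (r + r ^ 2 + (r * α + r * β)) + (γ + (r + r ^ 2 + (r * α + r * β)))))
          - (α + α) * ((β + β) * (γ + γ)))) / ((α + α) * ((β + β) * (γ + γ)))) := by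
  set Γ' : ℝ := γ + (r + r ^ 2 + (r * α + r * β)) with hΓ'
  set F : Set H3 := box α β γ with hFdef
  set B : Set H3 := box (α + r) (β + r) Γ' with hBdef
  set VF : ℝ := (α + α) * ((β + β) * (γ + γ)) with hVF
  set VB : ℝ := (α + r + (α + r)) * ((β + r + (β + r)) * (Γ' + Γ')) with hVB
  have hgc' : |g.c| ≤ r + r ^ 2 := le_trans hgc (by nlinarith)
  have hia : |g⁻¹.a| ≤ r := by simpa using hga
  have hib : |g⁻¹.b| ≤ r := by simpa using hgb
  have hic : |g⁻¹.c| ≤ r + r ^ 2 := by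
    simp only [inv_c]
    calc |g.a * g.b - g.c| ≤ |g.a * g.b| + |g.c| := abs_sub _ _
      _ ≤ r + r ^ 2 := by
          rw [abs_mul]
          nlinarith [mul_le_mul hga hgb (abs_nonneg _) hr.le]
  have hFB : F ⊆ B := by
    rintro x ⟨h1, h2, h3⟩
    exact ⟨by linarith, by linarith, by nlinarith [mul_pos hr hα, mul_pos hr hβ]⟩
  have hmBF : MeasurableSet (B \ F) :=
    (measurableSet_box _ _ _).diff (measurableSet_box _ _ _)
  have hhaarF : haar F = ENNReal.ofReal VF := haar_box hα.le hβ.le γ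
  have hhaarB : haar B = ENNReal.ofReal VB := haar_box (by linarith) (by linarith) Γ'
  have hdiff : haar (B \ F) ≤ ENNReal.ofReal (VB - VF) := by
    rw [measure_diff hFB (measurableSet_box _ _ _).nullMeasurableSet
      (by rw [hhaarF]; exact ENNReal.ofReal_ne_top), hhaarF, hhaarB]
    exact ofReal_sub_le _ _
  have hVBF : 0 ≤ VB - VF := by
    have : VF ≤ VB := by
      rw [hVF, hVB]
      gcongr <;> nlinarith [mul_pos hr hα, mul_pos hr hβ]
    linarith
  have hVFpos : 0 < VF := by rw [hVF]; positivity
  have hmain : ∀ S : Set H3,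
      S ⊆ (B \ F) ∪ (g * ·) '' (B \ F) ∨ S ⊆ (B \ F) ∪ (· * g) '' (B \ F) →
      haar S / haar F ≤ ENNReal.ofReal ((2 * (VB - VF)) / VF) := by
    intro S hS
    have himg : haar S ≤ ENNReal.ofReal (2 * (VB - VF)) := by
      have h2' : haar S ≤ haar (B \ F) + haar (B \ F) := by
        rcases hS with hS | hS
        · calc haar S ≤ haar ((B \ F) ∪ (g * ·) '' (B \ F)) := measure_mono hS
            _ ≤ haar (B \ F) + haar ((g * ·) '' (B \ F)) := measure_union_le _ _
            _ = haar (B \ F) + haar (B \ F) := by rw [haar_image_mul_left g hmBF]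
        · calc haar S ≤ haar ((B \ F) ∪ (· * g) '' (B \ F)) := measure_mono hS
            _ ≤ haar (B \ F) + haar ((· * g) '' (B \ F)) := measure_union_le _ _
            _ = haar (B \ F) + haar (B \ F) := by rw [haar_image_mul_right g hmBF]
      calc haar S ≤ haar (B \ F) + haar (B \ F) := h2'
        _ ≤ ENNReal.ofReal (VB - VF) + ENNReal.ofReal (VB - VF) := add_le_add hdiff hdiff
        _ = ENNReal.ofReal (2 * (VB - VF)) := by
            rw [← ENNReal.ofReal_add hVBF hVBF]; congr 1; ring
    calc haar S / haar F ≤ ENNReal.ofReal (2 * (VB - VF)) / haar F :=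
          ENNReal.div_le_div_right himg _
      _ = ENNReal.ofReal ((2 * (VB - VF)) / VF) := by
          rw [hhaarF, ← ENNReal.ofReal_div_of_pos hVFpos]
  constructor
  · exact hmain _ (Or.inl (symmDiff_mul_left_subset g
      (mul_box_subset_left hα.le hβ.le hga hgb hgc')
      (mul_box_subset_left hα.le hβ.le hia hib hic)))
  · exact hmain _ (Or.inr (symmDiff_mul_right_subset g
      (mul_box_subset_right hα.le hβ.le hga hgb hgc')
      (mul_box_subset_right hα.le hβ.le hia hib hic)))

end H3

end Aux2

section Aux3

open MeasureTheory Set H3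

namespace H3

lemma inv_bound {α β γ : ℝ} (hα : 0 < α) (hβ : 0 < β) (hγ : 0 < γ) :
    haar (symmDiff (box α β γ) (box α β γ)⁻¹) / haar (box α β γ)
      ≤ ENNReal.ofReal ((((α + α) * ((β + β) * (γ + γ))
          - (α + α) * ((β + β) * (γ - α * β + (γ - α * β))))
        + ((α + α) * ((β + β) * (γ + α * β + (γ + α * β)))
          - (α + α) * ((β + β) * (γ + γ))))
        / ((α + α) * ((β + β) * (γ + γ)))) := by
  set F : Set H3 := box α β γ with hFdef
  set Bs : Set H3 := box α β (γ - α * β) with hBs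
  set Bb : Set H3 := box α β (γ + α * β) with hBb
  set Vs : ℝ := (α + α) * ((β + β) * (γ - α * β + (γ - α * β))) with hVs
  set VF : ℝ := (α + α) * ((β + β) * (γ + γ)) with hVF
  set Vb : ℝ := (α + α) * ((β + β) * (γ + α * β + (γ + α * β))) with hVb
  have hαβ : 0 < α * β := mul_pos hα hβ
  have hsF : Bs ⊆ F := box_mono (by linarith)
  have hFb : F ⊆ Bb := box_mono (by linarith)
  have hsInv : Bs ⊆ F⁻¹ := by
    rintro x ⟨h1, h2, h3⟩
    show x⁻¹ ∈ F
    refine ⟨by simpa using h1, by simpa using h2, ?_⟩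
    simp only [inv_c]
    calc |x.a * x.b - x.c| ≤ |x.a * x.b| + |x.c| := abs_sub _ _
      _ ≤ γ := by
          rw [abs_mul]
          nlinarith [mul_le_mul h1 h2 (abs_nonneg _) hα.le]
  have hInvb : F⁻¹ ⊆ Bb := by
    intro x hx
    obtain ⟨h1, h2, h3⟩ := (Set.mem_inv.1 hx : x⁻¹ ∈ F)
    simp only [inv_a, inv_b, inv_c, abs_neg] at h1 h2 h3
    refine ⟨h1, h2, ?_⟩
    have key : |x.c| ≤ |x.a * x.b| + |x.a * x.b - x.c| := by
      have h := abs_sub (x.a * x.b) (x.a * x.b - x.c)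
      simpa using h
    nlinarith [mul_le_mul h1 h2 (abs_nonneg _) hα.le, abs_mul x.a x.b]
  have hsub : symmDiff F F⁻¹ ⊆ (F \ Bs) ∪ (Bb \ F) := by
    rw [Set.symmDiff_def]
    rintro x (⟨hx1, hx2⟩ | ⟨hx1, hx2⟩)
    · exact Or.inl ⟨hx1, fun hc => hx2 (hsInv hc)⟩
    · exact Or.inr ⟨hInvb hx1, hx2⟩
  have hhF : haar F = ENNReal.ofReal VF := haar_box hα.le hβ.le γ
  have hhs : haar Bs = ENNReal.ofReal Vs := haar_box hα.le hβ.le _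
  have hhb : haar Bb = ENNReal.ofReal Vb := haar_box hα.le hβ.le _
  have d1 : haar (F \ Bs) ≤ ENNReal.ofReal (VF - Vs) := by
    rw [measure_diff hsF (measurableSet_box _ _ _).nullMeasurableSet
      (by rw [hhs]; exact ENNReal.ofReal_ne_top), hhF, hhs]
    exact ofReal_sub_le _ _
  have d2 : haar (Bb \ F) ≤ ENNReal.ofReal (Vb - VF) := by
    rw [measure_diff hFb (measurableSet_box _ _ _).nullMeasurableSet
      (by rw [hhF]; exact ENNReal.ofReal_ne_top), hhF, hhb]
    exact ofReal_sub_le _ _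
  have n1 : 0 ≤ VF - Vs := by rw [hVF, hVs]; nlinarith
  have n2 : 0 ≤ Vb - VF := by rw [hVb, hVF]; nlinarith
  have hVFpos : 0 < VF := by rw [hVF]; positivity
  have htot : haar (symmDiff F F⁻¹) ≤ ENNReal.ofReal ((VF - Vs) + (Vb - VF)) := by
    calc haar (symmDiff F F⁻¹) ≤ haar ((F \ Bs) ∪ (Bb \ F)) := measure_mono hsub
      _ ≤ haar (F \ Bs) + haar (Bb \ F) := measure_union_le _ _
      _ ≤ ENNReal.ofReal (VF - Vs) + ENNReal.ofReal (Vb - VF) := add_le_add d1 d2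
      _ = ENNReal.ofReal ((VF - Vs) + (Vb - VF)) := (ENNReal.ofReal_add n1 n2).symm
  calc haar (symmDiff F F⁻¹) / haar F
      ≤ ENNReal.ofReal ((VF - Vs) + (Vb - VF)) / haar F := ENNReal.div_le_div_right htot _
    _ = ENNReal.ofReal (((VF - Vs) + (Vb - VF)) / VF) := by
        rw [hhF, ← ENNReal.ofReal_div_of_pos hVFpos]

end H3

end Aux3


section Statement
open MeasureTheory

/-- A two-sided Følner sequence in `H₃(ℝ)`: compact sets of positive finite Haar measure
such that both `λ(gFₙ ∆ Fₙ)/λ(Fₙ) → 0` and `λ(Fₙg ∆ Fₙ)/λ(Fₙ) → 0`, uniformly in `g`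
on compact subsets. -/
def IsTwoSidedFolnerSeq (F : ℕ → Set H3) : Prop :=
  (∀ n, IsCompact (F n) ∧ 0 < H3.haar (F n) ∧ H3.haar (F n) < ⊤) ∧
  ∀ K : Set H3, IsCompact K → ∀ ε : ENNReal, 0 < ε → ∃ N : ℕ, ∀ n ≥ N, ∀ g ∈ K,
    H3.haar (symmDiff ((g * ·) '' F n) (F n)) / H3.haar (F n) < ε ∧
    H3.haar (symmDiff ((· * g) '' F n) (F n)) / H3.haar (F n) < ε

/-- **Lemma 3.1.** Let `αₙ, βₙ, γₙ → ∞` with `αₙ/γₙ → 0` and `βₙ/γₙ → 0`. Then the boxes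
`(I(αₙ,βₙ,γₙ))ₙ` form a two-sided Følner sequence in `H₃(ℝ)`. Moreover, if in addition
`(αₙβₙ)/γₙ → 0`, then `λ(I(αₙ,βₙ,γₙ) ∆ I(αₙ,βₙ,γₙ)⁻¹)/λ(I(αₙ,βₙ,γₙ)) → 0`. -/
theorem boxes_twoSided_folner (α β γ : ℕ → ℝ)
    (hα : ∀ n, 0 < α n) (hβ : ∀ n, 0 < β n) (hγ : ∀ n, 0 < γ n)
    (hαtop : Tendsto α atTop atTop) (hβtop : Tendsto β atTop atTop)
    (hγtop : Tendsto γ atTop atTop)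
    (h1 : Tendsto (fun n => α n / γ n) atTop (𝓝 0))
    (h2 : Tendsto (fun n => β n / γ n) atTop (𝓝 0)) :
    IsTwoSidedFolnerSeq (fun n => H3.box (α n) (β n) (γ n)) ∧
    (Tendsto (fun n => α n * β n / γ n) atTop (𝓝 0) →
      Tendsto
        (fun n =>
          H3.haar (symmDiff (H3.box (α n) (β n) (γ n)) (H3.box (α n) (β n) (γ n))⁻¹) /
            H3.haar (H3.box (α n) (β n) (γ n)))
        atTop (𝓝 0)) := by
  constructor
  · constructor
    · intro n
      refine ⟨H3.isCompact_box _ _ _, ?_, ?_⟩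
      · rw [H3.haar_box (hα n).le (hβ n).le]
        refine ENNReal.ofReal_pos.2 ?_
        have := hα n; have := hβ n; have := hγ n
        positivity
      · rw [H3.haar_box (hα n).le (hβ n).le]
        exact ENNReal.ofReal_lt_top
    · intro K hK ε hε
      obtain ⟨r, hr, hKr⟩ : ∃ r : ℝ, 0 < r ∧ ∀ g ∈ K, |g.a| ≤ r ∧ |g.b| ≤ r ∧ |g.c| ≤ r := by
        rcases K.eq_empty_or_nonempty with rfl | hne
        · exact ⟨1, one_pos, fun g hg => absurd hg (Set.notMem_empty g)⟩
        · have hca : Continuous fun g : H3 => |g.a| :=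
            (continuous_fst.comp H3.continuous_toProd).abs
          have hcb : Continuous fun g : H3 => |g.b| :=
            (continuous_fst.comp (continuous_snd.comp H3.continuous_toProd)).abs
          have hcc : Continuous fun g : H3 => |g.c| :=
            (continuous_snd.comp (continuous_snd.comp H3.continuous_toProd)).abs
          obtain ⟨g₀, hg₀K, hmax⟩ := hK.exists_isMaxOn hne
            (hca.max (hcb.max hcc)).continuousOn
          refine ⟨|g₀.a| ⊔ (|g₀.b| ⊔ |g₀.c|) + 1, ?_, fun g hg => ?_⟩
          · have h0 : (0:ℝ) ≤ |g₀.a| := abs_nonneg _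
            have h1' : |g₀.a| ≤ |g₀.a| ⊔ (|g₀.b| ⊔ |g₀.c|) := le_max_left _ _
            linarith
          · have hm : |g.a| ⊔ (|g.b| ⊔ |g.c|) ≤ |g₀.a| ⊔ (|g₀.b| ⊔ |g₀.c|) := hmax hg
            have e1 : |g.a| ≤ |g.a| ⊔ (|g.b| ⊔ |g.c|) := le_max_left _ _
            have e2 : |g.b| ≤ |g.a| ⊔ (|g.b| ⊔ |g.c|) :=
              le_trans (le_max_left _ _) (le_max_right _ _)
            have e3 : |g.c| ≤ |g.a| ⊔ (|g.b| ⊔ |g.c|) :=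
              le_trans (le_max_right _ _) (le_max_right _ _)
            exact ⟨by linarith, by linarith, by linarith⟩
      set t : ℕ → ℝ := fun n => (2 * ((α n + r + (α n + r)) * ((β n + r + (β n + r)) *
            (γ n + (r + r ^ 2 + (r * α n + r * β n)) +
              (γ n + (r + r ^ 2 + (r * α n + r * β n)))))
          - (α n + α n) * ((β n + β n) * (γ n + γ n)))) /
          ((α n + α n) * ((β n + β n) * (γ n + γ n))) with htdef
      have hteq : ∀ n, t n = 2 * ((1 + r / α n) * ((1 + r / β n) *
          (1 + ((r + r ^ 2) / γ n + (r * (α n / γ n) + r * (β n / γ n))))) - 1) := by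
        intro n
        have ha := (hα n).ne'
        have hb := (hβ n).ne'
        have hc := (hγ n).ne'
        have ha2 : α n + α n ≠ 0 := by have := hα n; positivity
        have hb2 : β n + β n ≠ 0 := by have := hβ n; positivity
        have hc2 : γ n + γ n ≠ 0 := by have := hγ n; positivity
        rw [htdef]
        field_simp
      have hlim : Tendsto t atTop (𝓝 0) := by
        have l1 : Tendsto (fun n => r / α n) atTop (𝓝 0) :=
          Tendsto.div_atTop tendsto_const_nhds hαtop
        have l2 : Tendsto (fun n => r / β n) atTop (𝓝 0) :=
          Tendsto.div_atTop tendsto_const_nhds hβtop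
        have l3 : Tendsto (fun n => (r + r ^ 2) / γ n) atTop (𝓝 0) :=
          Tendsto.div_atTop tendsto_const_nhds hγtop
        have l4 : Tendsto (fun n => r * (α n / γ n)) atTop (𝓝 0) := by
          simpa using h1.const_mul r
        have l5 : Tendsto (fun n => r * (β n / γ n)) atTop (𝓝 0) := by
          simpa using h2.const_mul r
        have big : Tendsto (fun n => 2 * ((1 + r / α n) * ((1 + r / β n) *
            (1 + ((r + r ^ 2) / γ n + (r * (α n / γ n) + r * (β n / γ n))))) - 1)) atTop
            (𝓝 (2 * ((1 + 0) * ((1 + 0) * (1 + (0 + (0 + 0)))) - 1))) :=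
          (((tendsto_const_nhds.add l1).mul ((tendsto_const_nhds.add l2).mul
            (tendsto_const_nhds.add (l3.add (l4.add l5))))).sub tendsto_const_nhds).const_mul 2
        refine Tendsto.congr (fun n => (hteq n).symm) ?_
        simpa using big
      have hof : Tendsto (fun n => ENNReal.ofReal (t n)) atTop (𝓝 0) := by
        simpa using ENNReal.tendsto_ofReal hlim
      obtain ⟨N, hN⟩ := eventually_atTop.1 (hof.eventually_lt_const hε)
      refine ⟨N, fun n hn g hg => ?_⟩
      obtain ⟨hga, hgb, hgc⟩ := hKr g hg
      obtain ⟨b1, b2⟩ := H3.folner_bound (hα n) (hβ n) (hγ n) hr hga hgb hgc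
      exact ⟨lt_of_le_of_lt b1 (hN n hn), lt_of_le_of_lt b2 (hN n hn)⟩
  · intro h3
    set s : ℕ → ℝ := fun n => ((((α n + α n) * ((β n + β n) * (γ n + γ n))
          - (α n + α n) * ((β n + β n) * (γ n - α n * β n + (γ n - α n * β n))))
        + ((α n + α n) * ((β n + β n) * (γ n + α n * β n + (γ n + α n * β n)))
          - (α n + α n) * ((β n + β n) * (γ n + γ n))))
        / ((α n + α n) * ((β n + β n) * (γ n + γ n)))) with hsdef
    have hbound : ∀ n, H3.haar (symmDiff (H3.box (α n) (β n) (γ n))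
        (H3.box (α n) (β n) (γ n))⁻¹) / H3.haar (H3.box (α n) (β n) (γ n))
        ≤ ENNReal.ofReal (s n) := fun n => H3.inv_bound (hα n) (hβ n) (hγ n)
    have hseq : ∀ n, s n = 2 * (α n * β n / γ n) := by
      intro n
      have ha := (hα n).ne'
      have hb := (hβ n).ne'
      have hc := (hγ n).ne'
      have ha2 : α n + α n ≠ 0 := by have := hα n; positivity
      have hb2 : β n + β n ≠ 0 := by have := hβ n; positivity
      have hc2 : γ n + γ n ≠ 0 := by have := hγ n; positivity
      rw [hsdef]
      field_simp
      ring
    have hs0 : Tendsto s atTop (𝓝 0) := by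
      refine Tendsto.congr (fun n => (hseq n).symm) ?_
      simpa using h3.const_mul 2
    have hofs : Tendsto (fun n => ENNReal.ofReal (s n)) atTop (𝓝 0) := by
      simpa using ENNReal.tendsto_ofReal hs0
    exact tendsto_of_tendsto_of_tendsto_of_le_of_le tendsto_const_nhds hofs
      (fun n => zero_le) hbound

end Statement
end

section
/- Let T be a measure-preserving action of H₃(ℝ) on a standard probability space (X, ℬ, μ). If the central flow (T_{c(t)})_{t∈ℝ} is ergodic, then it is weakly mixing: there is no nonzero f ∈ L²(X, μ) and s ∈ ℝ, s ≠ 0, such that f ∘ T_{c(t)} = e^{ist} f μ-a.e. for all t ∈ ℝ, and every f with f ∘ T_{c(t)} = f for all t is constant. -/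
open Filter Topology Pointwise

section Statement
section AuxProofs
open MeasureTheory Set

namespace H3WM

lemma measurable_of_toProd {α : Type*} [MeasurableSpace α] {g : α → H3}
    (h : Measurable fun a => H3.toProd (g a)) : Measurable g := by
  intro t ht
  obtain ⟨u, hu, rfl⟩ := ht
  exact h hu

lemma measurable_C : Measurable H3.C :=
  measurable_of_toProd (by
    have : (fun t => H3.toProd (H3.C t)) = fun t : ℝ => ((0:ℝ), (0:ℝ), t) := rfl
    rw [this]
    exact measurable_const.prodMk (measurable_const.prodMk measurable_id))

variable (s : H3System)

lemma meas_T (g : H3) : Measurable (s.T g) :=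
  s.t_meas.comp (measurable_const.prodMk measurable_id)

lemma meas_flow : Measurable fun p : s.X × ℝ => s.T (H3.C p.2) p.1 :=
  s.t_meas.comp ((measurable_C.comp measurable_snd).prodMk measurable_fst)

lemma ae_T (g : H3) {p : s.X → Prop} (hp : ∀ᵐ x ∂s.μ, p x) :
    ∀ᵐ x ∂s.μ, p (s.T g x) := by
  refine ae_of_ae_map (meas_T s g).aemeasurable ?_
  rwa [(s.t_mp g).map_eq]

lemma C_mul_C (t u : ℝ) : H3.C t * H3.C u = H3.C (t + u) := by
  ext <;> simp [H3.C]

lemma dichotomy (hprob : IsProbabilityMeasure s.μ) (herg : s.CentralErgodic)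
    {h : s.X → ℝ} (hm : Measurable h)
    (hinv : ∀ t : ℝ, (fun x => h (s.T (H3.C t) x)) =ᵐ[s.μ] h) (q : ℝ) :
    s.μ {x | h x ≤ q} = 0 ∨ s.μ {x | h x ≤ q}ᶜ = 0 := by
  haveI := hprob
  set A : Set s.X := {x | h x ≤ q} with hA
  have mA : MeasurableSet A := hm measurableSet_Iic
  -- the mismatch set
  set E : Set (s.X × ℝ) := {p | (h (s.T (H3.C p.2) p.1) ≤ q) ≠ (h p.1 ≤ q)} with hE
  have mE : MeasurableSet E := by
    have m1 : MeasurableSet {p : s.X × ℝ | h (s.T (H3.C p.2) p.1) ≤ q} :=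
      (hm.comp (meas_flow s)) measurableSet_Iic
    have m2 : MeasurableSet {p : s.X × ℝ | h p.1 ≤ q} :=
      (hm.comp measurable_fst) measurableSet_Iic
    have : E = ({p : s.X × ℝ | h (s.T (H3.C p.2) p.1) ≤ q} \ {p | h p.1 ≤ q}) ∪
        ({p : s.X × ℝ | h p.1 ≤ q} \ {p | h (s.T (H3.C p.2) p.1) ≤ q}) := by
      ext p
      by_cases h1 : h (s.T (H3.C p.2) p.1) ≤ q <;> by_cases h2 : h p.1 ≤ q <;>
        simp [hE, h1, h2]
    rw [this]
    exact (m1.diff m2).union (m2.diff m1)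
  -- μ-sections of E are null
  have hsec : ∀ t : ℝ, ∀ᵐ x ∂s.μ, ¬ ((x, t) ∈ E) := by
    intro t
    filter_upwards [hinv t] with x hx
    simp [hE, hx]
  -- Fubini: a.e. x, the ℝ-section is null
  have hfub : ∀ᵐ x ∂s.μ, ∀ᵐ t ∂(volume : Measure ℝ), ¬ ((x, t) ∈ E) := by
    have := (Measure.ae_ae_comm (μ := s.μ) (ν := (volume : Measure ℝ))
      (p := fun x t => ¬ ((x, t) ∈ E)) ?_).2 ?_
    · exact this
    · exact mE.compl
    · exact Filter.Eventually.of_forall hsec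
  -- the strictly invariant version of A
  set A' : Set s.X := {x | ∀ᵐ t ∂(volume : Measure ℝ), h (s.T (H3.C t) x) ≤ q} with hA'
  have mA' : MeasurableSet A' := by
    have mB : MeasurableSet {p : s.X × ℝ | ¬ h (s.T (H3.C p.2) p.1) ≤ q} :=
      ((hm.comp (meas_flow s)) measurableSet_Iic).compl
    have : A' = (fun x => (volume : Measure ℝ) (Prod.mk x ⁻¹' {p : s.X × ℝ | ¬ h (s.T (H3.C p.2) p.1) ≤ q})) ⁻¹' {0} := by
      ext x
      simp only [hA', mem_setOf_eq, mem_preimage, mem_singleton_iff]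
      rw [MeasureTheory.ae_iff]
      rfl
    rw [this]
    exact measurable_measure_prodMk_left mB (measurableSet_singleton 0)
  have hinvA' : ∀ u : ℝ, s.T (H3.C u) ⁻¹' A' = A' := by
    intro u
    ext x
    simp only [mem_preimage, hA', mem_setOf_eq]
    have hrw : ∀ t : ℝ, s.T (H3.C t) (s.T (H3.C u) x) = s.T (H3.C (t + u)) x := by
      intro t
      rw [← s.t_mul, C_mul_C]
    constructor
    · intro hx
      have : {t : ℝ | ¬ h (s.T (H3.C (t + u)) x) ≤ q} =
          (fun t : ℝ => t + u) ⁻¹' {t : ℝ | ¬ h (s.T (H3.C t) x) ≤ q} := rfl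
      rw [ae_iff] at hx ⊢
      simp only [hrw] at hx
      have h0 : (volume : Measure ℝ) ((fun t : ℝ => t + u) ⁻¹' {t : ℝ | ¬ h (s.T (H3.C t) x) ≤ q}) = 0 := by
        rw [← this]; exact hx
      rwa [measure_preimage_add_right] at h0
    · intro hx
      rw [ae_iff] at hx ⊢
      simp only [hrw]
      have : {t : ℝ | ¬ h (s.T (H3.C (t + u)) x) ≤ q} =
          (fun t : ℝ => t + u) ⁻¹' {t : ℝ | ¬ h (s.T (H3.C t) x) ≤ q} := rfl
      rw [this, measure_preimage_add_right]
      exact hx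
  -- A =ᵐ A'
  have hae : A =ᵐ[s.μ] A' := by
    filter_upwards [hfub] with x hx
    show (x ∈ A) = (x ∈ A')
    by_cases hxa : x ∈ A
    · simp only [hxa, eq_iff_iff, true_iff]
      show ∀ᵐ t ∂(volume : Measure ℝ), h (s.T (H3.C t) x) ≤ q
      filter_upwards [hx] with t ht
      by_contra hc
      exact ht (by simp [hE, hc, hxa.out])
    · simp only [hxa, eq_iff_iff, false_iff]
      intro hxA'
      have h1 : ∀ᵐ t ∂(volume : Measure ℝ), False := by
        filter_upwards [hx, hxA'] with t ht h2
        have : x ∈ A := by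
          by_contra hc
          exact ht (by simp [hE, h2, hA] at hc ⊢; tauto)
        exact hxa this
      have : (volume : Measure ℝ) univ = 0 := by
        rw [ae_iff] at h1
        simpa using h1
      rw [Real.volume_univ] at this
      exact ENNReal.top_ne_zero this
  have := herg A' mA' hinvA'
  rcases this with h0 | h0
  · exact Or.inl ((measure_congr hae).trans h0)
  · exact Or.inr ((measure_congr (ae_eq_set_compl_compl.2 hae)).trans h0)

lemma const_real (hprob : IsProbabilityMeasure s.μ) (herg : s.CentralErgodic)
    {h : s.X → ℝ} (hm : Measurable h)
    (hinv : ∀ t : ℝ, (fun x => h (s.T (H3.C t) x)) =ᵐ[s.μ] h) :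
    ∃ c : ℝ, h =ᵐ[s.μ] fun _ => c := by
  haveI := hprob
  have hdich := dichotomy s hprob herg hm hinv
  have hone : ∀ q : ℝ, s.μ {x | h x ≤ q}ᶜ = 0 ↔ s.μ {x | h x ≤ q} = 1 :=
    fun q => prob_compl_eq_zero_iff (hm measurableSet_Iic)
  have hmono : ∀ {q q' : ℝ}, q ≤ q' → {x | h x ≤ q} ⊆ {x | h x ≤ q'} :=
    fun hq x hx => le_trans hx hq
  set S : Set ℝ := {q | s.μ {x | h x ≤ q}ᶜ = 0} with hS
  have hne : S.Nonempty := by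
    by_contra hc
    have h0 : ∀ n : ℕ, s.μ {x | h x ≤ (n : ℝ)} = 0 := by
      intro n
      rcases hdich n with h1 | h1
      · exact h1
      · exact absurd ⟨(n:ℝ), h1⟩ hc
    have : s.μ (⋃ n : ℕ, {x | h x ≤ (n : ℝ)}) = 0 := measure_iUnion_null h0
    have huniv : (⋃ n : ℕ, {x : s.X | h x ≤ (n : ℝ)}) = Set.univ := by
      ext x
      simp only [Set.mem_iUnion, Set.mem_setOf_eq, Set.mem_univ, iff_true]
      obtain ⟨n, hn⟩ := exists_nat_ge (h x)
      exact ⟨n, hn⟩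
    rw [huniv, measure_univ] at this
    exact one_ne_zero this
  have hbdd : BddBelow S := by
    have hm0 : ∃ m : ℕ, s.μ {x | h x ≤ -(m : ℝ)} = 0 := by
      by_contra hc
      push_neg at hc
      have h1 : ∀ m : ℕ, s.μ {x | h x ≤ -(m : ℝ)}ᶜ = 0 := by
        intro m
        rcases hdich (-(m : ℝ)) with h1 | h1
        · exact absurd h1 (hc m)
        · exact h1
      have : s.μ (⋃ m : ℕ, {x : s.X | h x ≤ -(m : ℝ)}ᶜ) = 0 := measure_iUnion_null h1
      have huniv : (⋃ m : ℕ, {x : s.X | h x ≤ -(m : ℝ)}ᶜ) = Set.univ := by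
        ext x
        simp only [Set.mem_iUnion, Set.mem_compl_iff, Set.mem_setOf_eq, Set.mem_univ, iff_true,
          not_le]
        obtain ⟨m, hmlt⟩ := exists_nat_gt (-h x)
        exact ⟨m, by linarith⟩
      rw [huniv, measure_univ] at this
      exact one_ne_zero this
    obtain ⟨m, hm0⟩ := hm0
    refine ⟨-(m : ℝ), fun q hq => ?_⟩
    by_contra hlt
    push_neg at hlt
    have : s.μ {x | h x ≤ q} = 1 := (hone q).1 hq
    have hle : s.μ {x | h x ≤ q} ≤ s.μ {x | h x ≤ -(m : ℝ)} :=
      measure_mono (hmono hlt.le)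
    rw [this, hm0] at hle
    simp at hle
  set c : ℝ := sInf S with hc
  have hle1 : s.μ {x | h x ≤ c}ᶜ = 0 := by
    have heq : {x : s.X | h x ≤ c}ᶜ = ⋃ n : ℕ, {x : s.X | h x ≤ c + 1 / (n + 1)}ᶜ := by
      ext x
      simp only [Set.mem_compl_iff, Set.mem_setOf_eq, Set.mem_iUnion, not_le]
      constructor
      · intro hx
        obtain ⟨n, hn⟩ := exists_nat_one_div_lt (sub_pos.2 hx)
        exact ⟨n, by push_cast at hn ⊢; linarith⟩
      · rintro ⟨n, hn⟩
        have : (0:ℝ) < 1 / (n + 1) := by positivity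
        linarith
    rw [heq]
    refine measure_iUnion_null fun n => ?_
    have hpos : (0:ℝ) < 1 / (n + 1) := by positivity
    obtain ⟨q, hqS, hqlt⟩ := (csInf_lt_iff hbdd hne).1 (by linarith : c < c + 1 / ((n:ℝ) + 1))
    have : {x : s.X | h x ≤ c + 1 / ((n:ℝ) + 1)}ᶜ ⊆ {x : s.X | h x ≤ q}ᶜ :=
      Set.compl_subset_compl.2 (hmono hqlt.le)
    exact measure_mono_null this hqS
  have hlt0 : s.μ {x | h x < c} = 0 := by
    have heq : {x : s.X | h x < c} = ⋃ n : ℕ, {x : s.X | h x ≤ c - 1 / (n + 1)} := by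
      ext x
      simp only [Set.mem_setOf_eq, Set.mem_iUnion]
      constructor
      · intro hx
        obtain ⟨n, hn⟩ := exists_nat_one_div_lt (sub_pos.2 hx)
        exact ⟨n, by push_cast at hn ⊢; linarith⟩
      · rintro ⟨n, hn⟩
        have : (0:ℝ) < 1 / (n + 1) := by positivity
        linarith
    rw [heq]
    refine measure_iUnion_null fun n => ?_
    have hpos : (0:ℝ) < 1 / (n + 1) := by positivity
    rcases hdich (c - 1 / ((n:ℝ) + 1)) with h1 | h1
    · exact h1
    · exfalso
      have : c ≤ c - 1 / ((n:ℝ) + 1) := csInf_le hbdd h1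
      linarith
  refine ⟨c, ?_⟩
  rw [Filter.EventuallyEq, ae_iff]
  have hsub : {x : s.X | ¬ h x = c} ⊆ {x : s.X | h x ≤ c}ᶜ ∪ {x : s.X | h x < c} := by
    intro x hx
    simp only [Set.mem_union, Set.mem_compl_iff, Set.mem_setOf_eq, not_le]
    rcases lt_trichotomy (h x) c with h1 | h1 | h1
    · exact Or.inr h1
    · exact absurd h1 hx
    · exact Or.inl h1
  exact measure_mono_null hsub (measure_union_null hle1 hlt0)

lemma const_complex (hprob : IsProbabilityMeasure s.μ) (herg : s.CentralErgodic)
    {g : s.X → ℂ} (hm : Measurable g)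
    (hinv : ∀ t : ℝ, (fun x => g (s.T (H3.C t) x)) =ᵐ[s.μ] g) :
    ∃ z : ℂ, g =ᵐ[s.μ] fun _ => z := by
  obtain ⟨c₁, hc₁⟩ := const_real s hprob herg (Complex.measurable_re.comp hm)
    (fun t => (hinv t).fun_comp Complex.re)
  obtain ⟨c₂, hc₂⟩ := const_real s hprob herg (Complex.measurable_im.comp hm)
    (fun t => (hinv t).fun_comp Complex.im)
  refine ⟨⟨c₁, c₂⟩, ?_⟩
  filter_upwards [hc₁, hc₂] with x h1 h2
  exact Complex.ext h1 h2


lemma central_comm (g : H3) (t : ℝ) : g * H3.C t = H3.C t * g := by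
  ext <;> simp [H3.C] <;> ring

lemma comm_rel (v : ℝ) : H3.A 1 * (H3.B v * (H3.A (-1) * H3.B (-v))) = H3.C v := by
  ext <;> simp [H3.A, H3.B, H3.C] <;> ring

lemma A_mul_A_neg (u : ℝ) : H3.A u * H3.A (-u) = 1 := by
  ext <;> simp [H3.A]

lemma B_mul_B_neg (v : ℝ) : H3.B v * H3.B (-v) = 1 := by
  ext <;> simp [H3.B]

end H3WM
end AuxProofs

section Statement
open MeasureTheory

/-- **Proposition 3.10.** Let `T` be a measure-preserving action of `H₃(ℝ)` on a standard
probability space. If the central flow `(T_{c(t)})_{t∈ℝ}` is ergodic then it is weakly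
mixing: there is no nonzero `f ∈ L²(X,μ)` and `s ≠ 0` with `f ∘ T_{c(t)} = e^{ist} f` a.e.
for all `t`, and every `f ∈ L²(X,μ)` with `f ∘ T_{c(t)} = f` a.e. for all `t` is constant. -/
theorem central_flow_weaklyMixing_of_ergodic (s : H3System) (hstd : s.IsStdProb)
    (herg : s.CentralErgodic) :
    (∀ (f : Lp ℂ 2 s.μ) (r : ℝ), r ≠ 0 →
      (∀ t : ℝ, (fun x => (f : s.X → ℂ) (s.T (H3.C t) x)) =ᵐ[s.μ]
        fun x => Complex.exp (Complex.I * (r * t : ℝ)) * (f : s.X → ℂ) x) →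
      f = 0) ∧
    (∀ f : Lp ℂ 2 s.μ,
      (∀ t : ℝ, (fun x => (f : s.X → ℂ) (s.T (H3.C t) x)) =ᵐ[s.μ] (f : s.X → ℂ)) →
      ∃ z : ℂ, (f : s.X → ℂ) =ᵐ[s.μ] fun _ => z) := by
  obtain ⟨-, hprob⟩ := hstd
  haveI := hprob
  haveI : (ae s.μ).NeBot := ae_neBot.2 (IsProbabilityMeasure.ne_zero s.μ)
  constructor
  · intro f r hr hf
    set F : s.X → ℂ := (f : s.X → ℂ) with hFdef
    have hFm : Measurable F := (Lp.stronglyMeasurable f).measurable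
    by_cases h0 : F =ᵐ[s.μ] 0
    · exact Lp.eq_zero_iff_ae_eq_zero.2 h0
    exfalso
    -- the modulus of F is a.e. constant, nonzero
    have habs : ∀ t : ℝ, (fun x => ‖F (s.T (H3.C t) x)‖) =ᵐ[s.μ]
        fun x => ‖F x‖ := by
      intro t
      filter_upwards [hf t] with x hx
      rw [hx, norm_mul, Complex.norm_exp]
      simp [Complex.mul_re]
    obtain ⟨c, hcconst⟩ := H3WM.const_real s hprob herg (continuous_norm.measurable.comp hFm) habs
    have hcne : c ≠ 0 := by
      intro hc0
      apply h0
      filter_upwards [hcconst] with x hx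
      have hx' : ‖F x‖ = 0 := by
        rw [show ‖F x‖ = c from hx, hc0]
      simpa using hx'
    have hFne : ∀ᵐ x ∂s.μ, F x ≠ 0 := by
      filter_upwards [hcconst] with x hx h
      have hx' : ‖F x‖ = c := hx
      rw [h, norm_zero] at hx'
      exact hcne hx'.symm
    -- every T_g acts on F by a scalar
    have eig : ∀ g : H3, ∃ lam : ℂ, ∀ᵐ x ∂s.μ, F (s.T g x) = lam * F x := by
      intro g
      set Q : s.X → ℂ := fun x => F (s.T g x) * (F x)⁻¹ with hQdef
      have hQm : Measurable Q := (hFm.comp (H3WM.meas_T s g)).mul hFm.inv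
      have hQinv : ∀ t : ℝ, (fun x => Q (s.T (H3.C t) x)) =ᵐ[s.μ] Q := by
        intro t
        have h2 : ∀ᵐ x ∂s.μ,
            F (s.T (H3.C t) (s.T g x)) = Complex.exp (Complex.I * (r * t : ℝ)) * F (s.T g x) :=
          H3WM.ae_T s g (hf t)
        filter_upwards [hf t, h2] with x e1 e2
        show F (s.T g (s.T (H3.C t) x)) * (F (s.T (H3.C t) x))⁻¹ = Q x
        have hsw : s.T g (s.T (H3.C t) x) = s.T (H3.C t) (s.T g x) := by
          rw [← s.t_mul, ← s.t_mul, H3WM.central_comm]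
        have hene : Complex.exp (Complex.I * (r * t : ℝ)) ≠ 0 := Complex.exp_ne_zero _
        rw [hsw, e1, e2, mul_inv,
          show ∀ e w u v : ℂ, e * w * (u * v) = e * u * (w * v) from fun _ _ _ _ => by ring,
          mul_inv_cancel₀ hene, one_mul]
      obtain ⟨lam, hlam⟩ := H3WM.const_complex s hprob herg hQm hQinv
      refine ⟨lam, ?_⟩
      filter_upwards [hlam, hFne] with x h1 h2
      have hq : F (s.T g x) * (F x)⁻¹ = lam := h1
      calc F (s.T g x) = F (s.T g x) * (F x)⁻¹ * F x := by field_simp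
        _ = lam * F x := by rw [hq]
    choose lam hlam using eig
    -- lam is multiplicative
    have hmul : ∀ g h : H3, lam (g * h) = lam g * lam h := by
      intro g h
      have e1 : ∀ᵐ x ∂s.μ, F (s.T g (s.T h x)) = lam g * F (s.T h x) :=
        H3WM.ae_T s h (hlam g)
      obtain ⟨x, h1, h2, h3, h4⟩ := ((e1.and ((hlam h).and ((hlam (g * h)).and hFne))).exists)
      have : lam (g * h) * F x = lam g * lam h * F x := by
        rw [← h3, s.t_mul, h1, h2]
        ring
      exact mul_right_cancel₀ h4 this
    have hone : lam 1 = 1 := by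
      obtain ⟨x, h1, h2⟩ := ((hlam 1).and hFne).exists
      rw [s.t_one] at h1
      exact mul_right_cancel₀ h2 (by rw [← h1, one_mul])
    have hC : ∀ t : ℝ, lam (H3.C t) = Complex.exp (Complex.I * (r * t : ℝ)) := by
      intro t
      obtain ⟨x, h1, h2, h3⟩ := ((hlam (H3.C t)).and ((hf t).and hFne)).exists
      have h2' : F (s.T (H3.C t) x) = Complex.exp (Complex.I * (r * t : ℝ)) * F x := h2
      exact mul_right_cancel₀ h3 (by rw [← h1, h2'])
    have hC1 : ∀ v : ℝ, lam (H3.C v) = 1 := by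
      intro v
      rw [← H3WM.comm_rel v, hmul, hmul, hmul]
      have ha : lam (H3.A 1) * lam (H3.A (-1)) = 1 := by
        rw [← hmul, H3WM.A_mul_A_neg, hone]
      have hb : lam (H3.B v) * lam (H3.B (-v)) = 1 := by
        rw [← hmul, H3WM.B_mul_B_neg, hone]
      calc lam (H3.A 1) * (lam (H3.B v) * (lam (H3.A (-1)) * lam (H3.B (-v))))
          = (lam (H3.A 1) * lam (H3.A (-1))) * (lam (H3.B v) * lam (H3.B (-v))) := by ring
        _ = 1 := by rw [ha, hb, one_mul]
    have hcontra := (hC (Real.pi / r)).symm.trans (hC1 (Real.pi / r))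
    rw [show r * (Real.pi / r) = Real.pi from mul_div_cancel₀ _ hr] at hcontra
    rw [mul_comm, Complex.exp_pi_mul_I] at hcontra
    norm_num at hcontra
  · intro f hf
    exact H3WM.const_complex s hprob herg (Lp.stronglyMeasurable f).measurable hf

end Statement
end Statement
end
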